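/- Fix integers n ≥ 1, L ≥ 1 and d ≥ 0, and let x₁, …, x_n be i.i.d. uniform (Haar) on the complex unit circle U(1) = {z ∈ ℂ : |z| = 1}. Then E[(Σ_{ℓ=1}^{L} |Σ_{j=1}^{n} x_j^ℓ|²)^d] = |M_d^S|, where M_d^S = {(ℓ, a, b) ∈ {1,…,L}^d × {1,…,n}^d × {1,…,n}^d : Σ_{j=1}^{d} ℓ_j (e_{a_j} − e_{b_j}) = 0 in ℤ^n}, with e_1, …, e_n the standard basis vectors of ℤ^n. -/

import Mathlib

open MeasureTheory Filter

noncomputable def nuC : Measure ℝ :=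
  (ENNReal.ofReal (2 * Real.pi))⁻¹ • volume.restrict (Set.Ico 0 (2 * Real.pi))

lemma nuC_prob : IsProbabilityMeasure nuC := by
  constructor
  rw [nuC, Measure.smul_apply, Measure.restrict_apply MeasurableSet.univ, Set.univ_inter,
    Real.volume_Ico, smul_eq_mul]
  rw [sub_zero]
  have h : (0:ℝ) < 2 * Real.pi := by positivity
  exact ENNReal.inv_mul_cancel (ENNReal.ofReal_pos.mpr h).ne' ENNReal.ofReal_ne_top

lemma keyInt (k : ℤ) :
    ∫ t : ℝ, Complex.exp (Complex.I * k * t) ∂nuC = if k = 0 then 1 else 0 := by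
  have h2π : (0:ℝ) < 2 * Real.pi := by positivity
  rw [nuC, integral_smul_measure]
  have hres : ∫ t in Set.Ico 0 (2 * Real.pi), Complex.exp (Complex.I * k * t)
      = ∫ t in (0:ℝ)..(2 * Real.pi), Complex.exp (Complex.I * k * t) := by
    rw [intervalIntegral.integral_of_le h2π.le]
    exact setIntegral_congr_set Ico_ae_eq_Ioc
  rw [hres]
  have htr : ((ENNReal.ofReal (2 * Real.pi))⁻¹).toReal = (2 * Real.pi)⁻¹ := by
    rw [ENNReal.toReal_inv, ENNReal.toReal_ofReal h2π.le]
  rcases eq_or_ne k 0 with hk | hk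
  · simp only [hk, Int.cast_zero, mul_zero, zero_mul, Complex.exp_zero, if_pos rfl]
    rw [intervalIntegral.integral_const, htr]
    rw [sub_zero, smul_smul, inv_mul_cancel₀ h2π.ne', one_smul]
    simp
  · have hc : (Complex.I * k) ≠ 0 := by
      simp [Complex.I_ne_zero, Complex.ext_iff]
      exact_mod_cast hk
    have : ∀ t : ℝ, Complex.exp (Complex.I * k * t) = Complex.exp ((Complex.I * k) * t) := by
      intro t; ring_nf
    rw [integral_exp_mul_complex hc]
    have h1 : Complex.exp (Complex.I * k * (((2 * Real.pi : ℝ)) : ℂ)) = 1 := by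
      have := Complex.exp_int_mul_two_pi_mul_I k
      rw [← this]
      congr 1
      push_cast
      ring
    rw [if_neg hk, h1]
    simp

lemma phi_cont : Continuous (fun t : ℝ => Complex.exp (Complex.I * t)) :=
  Complex.continuous_exp.comp (continuous_const.mul Complex.continuous_ofReal)

lemma keyMono (p q : ℕ) :
    ∫ z : ℂ, z ^ p * (starRingEnd ℂ z) ^ q
      ∂(Measure.map (fun t : ℝ => Complex.exp (Complex.I * t)) nuC)
    = if p = q then 1 else 0 := by
  rw [integral_map phi_cont.aemeasurable (f := fun z : ℂ => z ^ p * (starRingEnd ℂ) z ^ q)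
    ((continuous_pow p).mul ((Complex.continuous_conj).pow q)).aestronglyMeasurable]
  have h : ∀ t : ℝ, Complex.exp (Complex.I * t) ^ p
      * (starRingEnd ℂ) (Complex.exp (Complex.I * t)) ^ q
      = Complex.exp (Complex.I * ((((p : ℤ) - (q : ℤ)) : ℤ) : ℂ) * t) := by
    intro t
    rw [← Complex.exp_nat_mul, ← Complex.exp_conj, ← Complex.exp_nat_mul, ← Complex.exp_add]
    congr 1
    have hc : (starRingEnd ℂ) (Complex.I * (t : ℂ)) = -(Complex.I * t) := by
      simp [Complex.conj_ofReal]
    rw [hc]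
    push_cast
    ring
  simp_rw [h]
  rw [keyInt ((p : ℤ) - q)]
  congr 1
  simp [sub_eq_zero, Nat.cast_inj]

lemma myFactor {E : Type*} [MeasurableSpace E] (μ : Measure E) [IsProbabilityMeasure μ]
    {m : ℕ} (f : Fin m → E → ℂ) :
    ∫ x : Fin m → E, ∏ i, f i (x i) ∂(Measure.pi fun _ => μ) = ∏ i, ∫ x, f i x ∂μ := by
  letI : MeasureSpace E := ⟨μ⟩
  rw [show (Measure.pi fun _ : Fin m => μ) = (volume : Measure (Fin m → E)) from
    (MeasureTheory.volume_pi).symm]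
  exact MeasureTheory.integral_fintype_prod_volume_eq_prod f

/-- **Moments of the multi-frequency correlation under the uniform `U(1)` prior
as a combinatorial count.** For `x₁,…,x_n` i.i.d. uniform (Haar) on the unit circle,
`E[(∑_{ℓ=1}^L |∑_j x_j^ℓ|²)^d] = |M_d^𝕊|` where `M_d^𝕊` is the set of tuples
`(ℓ,a,b) ∈ [L]^d × [n]^d × [n]^d` with `∑_j ℓ_j (e_{a_j} - e_{b_j}) = 0` in `ℤ^n`. -/
theorem stmt3 (n L d : ℕ) (hn : 1 ≤ n) (hL : 1 ≤ L)
    (μS : Measure ℂ) [IsProbabilityMeasure μS]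
    (hμS : μS = Measure.map (fun t : ℝ => Complex.exp (Complex.I * (t : ℂ)))
      ((ENNReal.ofReal (2 * Real.pi))⁻¹ • volume.restrict (Set.Ico 0 (2 * Real.pi)))) :
    ∫ x : Fin n → ℂ, (∑ ℓ ∈ Finset.Icc 1 L, ‖∑ j, x j ^ ℓ‖ ^ 2) ^ d
        ∂(Measure.pi fun _ => μS)
    = (Nat.card {t : (Fin d → ℕ) × (Fin d → Fin n) × (Fin d → Fin n) //
        (∀ j, t.1 j ∈ Finset.Icc 1 L) ∧
        ∀ s : Fin n, (∑ j, (t.1 j : ℤ) *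
          ((if t.2.1 j = s then 1 else 0) - (if t.2.2 j = s then 1 else 0))) = 0} : ℝ) := by
  classical
  have hμ : μS = Measure.map (fun t : ℝ => Complex.exp (Complex.I * t)) nuC := hμS
  -- the circle has full measure
  have hAmeas : MeasurableSet {z : ℂ | ‖z‖ = 1} :=
    continuous_norm.measurable (measurableSet_singleton 1)
  have hA : μS {z : ℂ | ‖z‖ = 1} = 1 := by
    haveI := nuC_prob
    rw [hμ, Measure.map_apply phi_cont.measurable hAmeas]
    have hpre : (fun t : ℝ => Complex.exp (Complex.I * t)) ⁻¹' {z | ‖z‖ = 1}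
        = Set.univ := by
      ext t
      simp [Complex.norm_exp]
    rw [hpre]
    exact measure_univ
  set π : Measure (Fin n → ℂ) := Measure.pi fun _ => μS with hπ
  have hae : ∀ᵐ x : Fin n → ℂ ∂π, ∀ s, ‖x s‖ = 1 := by
    have hmeas : MeasurableSet (Set.pi Set.univ fun _ : Fin n => {z : ℂ | ‖z‖ = 1}) :=
      MeasurableSet.univ_pi fun _ => hAmeas
    have hS : π (Set.pi Set.univ fun _ => {z | ‖z‖ = 1}) = 1 := by
      rw [hπ, Measure.pi_pi]
      simp [hA]
    have hcompl := (prob_compl_eq_zero_iff hmeas).mpr hS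
    rw [ae_iff]
    convert hcompl using 2
    ext x
    simp [Set.mem_pi]
  -- monomials
  set mono : (Fin d → ℕ × Fin n × Fin n) → (Fin n → ℂ) → ℂ :=
    fun g x => ∏ j, (x (g j).2.1) ^ (g j).1 * ((starRingEnd ℂ) (x (g j).2.2)) ^ (g j).1
    with hmono
  have hcont : ∀ g, Continuous (mono g) := fun g =>
    continuous_finset_prod _ fun j _ =>
      ((continuous_apply _).pow _).mul
        (((Complex.continuous_conj).comp (continuous_apply _)).pow _)
  have hint : ∀ g, Integrable (mono g) π := by
    intro g
    refine Integrable.mono' (integrable_const 1) (hcont g).aestronglyMeasurable ?_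
    filter_upwards [hae] with x hx
    have : ‖mono g x‖ = 1 := by
      simp only [hmono]
      rw [norm_prod]
      simp [norm_mul, norm_pow, Complex.norm_conj, hx]
    rw [this]
  -- regrouping a product over `Fin d` as a product over coordinates
  have swap : ∀ (v : Fin n → ℂ) (c : Fin d → Fin n) (e : Fin d → ℕ),
      ∏ s : Fin n, v s ^ (∑ j, if c j = s then e j else 0) = ∏ j, v (c j) ^ e j := by
    intro v c e
    simp_rw [← Finset.prod_pow_eq_pow_sum]
    rw [Finset.prod_comm]
    refine Finset.prod_congr rfl fun j _ => ?_
    have h1 : ∀ s : Fin n, v s ^ (if c j = s then e j else 0)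
        = if c j = s then v s ^ e j else 1 := fun s => by split <;> simp
    simp_rw [h1]
    simp
  -- value of each monomial integral
  have hmonoint : ∀ g : Fin d → ℕ × Fin n × Fin n, ∫ x, mono g x ∂π =
      if (∀ s : Fin n, (∑ j, if (g j).2.1 = s then (g j).1 else 0)
        = (∑ j, if (g j).2.2 = s then (g j).1 else 0)) then 1 else 0 := by
    intro g
    have hrw : ∀ x : Fin n → ℂ,
        (∏ s, (x s) ^ (∑ j, if (g j).2.1 = s then (g j).1 else 0)
          * ((starRingEnd ℂ) (x s)) ^ (∑ j, if (g j).2.2 = s then (g j).1 else 0))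
        = mono g x := by
      intro x
      simp only [hmono]
      rw [Finset.prod_mul_distrib, Finset.prod_mul_distrib,
        swap x (fun j => (g j).2.1) (fun j => (g j).1),
        swap (fun s => (starRingEnd ℂ) (x s)) (fun j => (g j).2.2) (fun j => (g j).1)]
    calc ∫ x, mono g x ∂π
        = ∫ x : Fin n → ℂ, ∏ s, (x s) ^ (∑ j, if (g j).2.1 = s then (g j).1 else 0)
            * ((starRingEnd ℂ) (x s)) ^ (∑ j, if (g j).2.2 = s then (g j).1 else 0) ∂π :=
          integral_congr_ae (Filter.Eventually.of_forall fun x => (hrw x).symm)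
      _ = ∏ s : Fin n, ∫ z : ℂ, z ^ (∑ j, if (g j).2.1 = s then (g j).1 else 0)
            * ((starRingEnd ℂ) z) ^ (∑ j, if (g j).2.2 = s then (g j).1 else 0) ∂μS :=
          myFactor μS (fun s z => z ^ (∑ j, if (g j).2.1 = s then (g j).1 else 0)
            * ((starRingEnd ℂ) z) ^ (∑ j, if (g j).2.2 = s then (g j).1 else 0))
      _ = ∏ s : Fin n, (if (∑ j, if (g j).2.1 = s then (g j).1 else 0)
            = (∑ j, if (g j).2.2 = s then (g j).1 else 0) then (1:ℂ) else 0) := by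
          refine Finset.prod_congr rfl fun s _ => ?_
          rw [hμ]
          exact keyMono _ _
      _ = _ := by rw [Finset.prod_boole]; simp
  -- the combinatorial finsets
  set P : Finset (ℕ × Fin n × Fin n) := (Finset.Icc 1 L) ×ˢ Finset.univ with hP
  set F : Finset ((Fin d → ℕ) × (Fin d → Fin n) × (Fin d → Fin n)) :=
    (Fintype.piFinset fun _ : Fin d => Finset.Icc 1 L) ×ˢ Finset.univ with hF
  set Q2 : ((Fin d → ℕ) × (Fin d → Fin n) × (Fin d → Fin n)) → Prop :=
    fun t => ∀ s : Fin n, (∑ j, (t.1 j : ℤ) *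
      ((if t.2.1 j = s then 1 else 0) - (if t.2.2 j = s then 1 else 0))) = 0 with hQ2
  have castsum : ∀ (c : Fin d → Fin n) (e : Fin d → ℕ) (s : Fin n),
      (∑ j, if c j = s then (e j : ℤ) else 0) = ((∑ j, if c j = s then e j else 0 : ℕ) : ℤ) := by
    intro c e s
    rw [Nat.cast_sum]
    refine Finset.sum_congr rfl fun j _ => ?_
    split <;> simp
  -- condition equivalence
  have hcond : ∀ g : Fin d → ℕ × Fin n × Fin n,
      ((∀ s : Fin n, (∑ j, if (g j).2.1 = s then (g j).1 else 0)
        = (∑ j, if (g j).2.2 = s then (g j).1 else 0))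
      ↔ Q2 (fun j => (g j).1, fun j => (g j).2.1, fun j => (g j).2.2)) := by
    intro g
    simp only [hQ2, mul_sub, mul_ite, mul_one, mul_zero, Finset.sum_sub_distrib, sub_eq_zero]
    constructor
    · intro h s
      rw [castsum, castsum, h s]
    · intro h s
      have hs := h s
      rw [castsum, castsum, Nat.cast_inj] at hs
      exact hs
  -- key complex identity
  have key : ∫ x : Fin n → ℂ,
      (((∑ ℓ ∈ Finset.Icc 1 L, ‖∑ j, x j ^ ℓ‖ ^ 2) ^ d : ℝ) : ℂ) ∂π
      = (((F.filter Q2).card : ℕ) : ℂ) := by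
    have hpt : ∀ x : Fin n → ℂ,
        (((∑ ℓ ∈ Finset.Icc 1 L, ‖∑ j, x j ^ ℓ‖ ^ 2) ^ d : ℝ) : ℂ)
        = ∑ g ∈ Fintype.piFinset (fun _ : Fin d => P), mono g x := by
      intro x
      have e1 : ∀ ℓ : ℕ, ((‖∑ j, x j ^ ℓ‖ ^ 2 : ℝ) : ℂ)
          = ∑ p ∈ (Finset.univ : Finset (Fin n × Fin n)),
              (x p.1) ^ ℓ * ((starRingEnd ℂ) (x p.2)) ^ ℓ := by
        intro ℓ
        have h1 : ((‖∑ j, x j ^ ℓ‖ ^ 2 : ℝ) : ℂ)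
            = (∑ j, x j ^ ℓ) * (starRingEnd ℂ) (∑ j, x j ^ ℓ) := by
          rw [Complex.sq_norm, ← Complex.mul_conj]
        rw [h1, map_sum, Finset.sum_mul_sum, ← Finset.univ_product_univ, Finset.sum_product]
        refine Finset.sum_congr rfl fun a _ => Finset.sum_congr rfl fun b _ => ?_
        rw [map_pow]
      rw [Complex.ofReal_pow, Complex.ofReal_sum]
      simp_rw [e1]
      rw [← Finset.sum_product']
      calc (∑ q ∈ (Finset.Icc 1 L) ×ˢ (Finset.univ : Finset (Fin n × Fin n)),
              (x q.2.1) ^ q.1 * ((starRingEnd ℂ) (x q.2.2)) ^ q.1) ^ d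
          = ∏ _j : Fin d, (∑ q ∈ P, (x q.2.1) ^ q.1 * ((starRingEnd ℂ) (x q.2.2)) ^ q.1) := by
            rw [← hP, Finset.prod_const, Finset.card_univ, Fintype.card_fin]
        _ = ∑ g ∈ Fintype.piFinset (fun _ : Fin d => P),
              ∏ j, (x (g j).2.1) ^ (g j).1 * ((starRingEnd ℂ) (x (g j).2.2)) ^ (g j).1 :=
            Finset.prod_univ_sum _ _
        _ = ∑ g ∈ Fintype.piFinset (fun _ : Fin d => P), mono g x := by
            simp only [hmono]
    rw [integral_congr_ae (Filter.Eventually.of_forall hpt),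
      integral_finset_sum _ (fun g _ => hint g)]
    rw [Finset.sum_congr rfl fun g _ => hmonoint g]
    have reidx : (∑ g ∈ Fintype.piFinset (fun _ : Fin d => P),
        if (∀ s : Fin n, (∑ j, if (g j).2.1 = s then (g j).1 else 0)
          = (∑ j, if (g j).2.2 = s then (g j).1 else 0)) then (1:ℂ) else 0)
        = ∑ t ∈ F, if Q2 t then (1:ℂ) else 0 := by
      refine Finset.sum_nbij'
        (i := fun g : Fin d → ℕ × Fin n × Fin n =>
          ((fun j => (g j).1, fun j => (g j).2.1, fun j => (g j).2.2) :
            (Fin d → ℕ) × (Fin d → Fin n) × (Fin d → Fin n)))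
        (j := fun t : (Fin d → ℕ) × (Fin d → Fin n) × (Fin d → Fin n) =>
          fun j => (t.1 j, t.2.1 j, t.2.2 j)) ?_ ?_ ?_ ?_ ?_
      · intro g hg
        simp only [hF, Finset.mem_product, Fintype.mem_piFinset, Finset.mem_univ, and_true]
        intro j
        have := (Fintype.mem_piFinset.mp hg) j
        simp only [hP, Finset.mem_product, Finset.mem_univ, and_true] at this
        exact this
      · intro t ht
        simp only [hF, Finset.mem_product, Fintype.mem_piFinset, Finset.mem_univ, and_true] at ht
        refine Fintype.mem_piFinset.mpr fun j => ?_
        simp only [hP, Finset.mem_product, Finset.mem_univ, and_true]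
        exact ht j
      · intro g _
        funext j
        rfl
      · intro t _
        rfl
      · intro g _
        exact if_congr (hcond g) rfl rfl
    rw [reidx, Finset.sum_boole]
  -- counting
  have hcount : Nat.card {t : (Fin d → ℕ) × (Fin d → Fin n) × (Fin d → Fin n) //
      (∀ j, t.1 j ∈ Finset.Icc 1 L) ∧ Q2 t} = (F.filter Q2).card := by
    have hset : {t : (Fin d → ℕ) × (Fin d → Fin n) × (Fin d → Fin n) |
        (∀ j, t.1 j ∈ Finset.Icc 1 L) ∧ Q2 t} = ↑(F.filter Q2) := by
      ext t
      simp only [Set.mem_setOf_eq, Finset.coe_filter, hF, Finset.mem_product,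
        Fintype.mem_piFinset, Finset.mem_univ, and_true]
    rw [← Set.ncard_coe_finset, ← hset]
    exact Nat.card_coe_set_eq _
  -- conclude
  have hre : ∫ x : Fin n → ℂ,
      (∑ ℓ ∈ Finset.Icc 1 L, ‖∑ j, x j ^ ℓ‖ ^ 2) ^ d ∂π
      = ((F.filter Q2).card : ℝ) := by
    have h2 : ((∫ x : Fin n → ℂ,
        (∑ ℓ ∈ Finset.Icc 1 L, ‖∑ j, x j ^ ℓ‖ ^ 2) ^ d ∂π : ℝ) : ℂ)
        = (((F.filter Q2).card : ℕ) : ℂ) :=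
      (integral_ofReal (𝕜 := ℂ)).symm.trans key
    exact_mod_cast h2
  rw [hre]
  exact congrArg (Nat.cast : ℕ → ℝ) hcount.symm
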